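/- Let p be a prime and ε ∈ {1, −1}. Then for every m with 1 ≤ m ≤ p − 1, the value S(ε + p·m, p²) equals ε·(2/p² − 2). -/

import Mathlib

open scoped Classical
open Finset

/-- The sawtooth function `((x))`. -/
noncomputable def saw (x : ℝ) : ℝ :=
  if ∃ z : ℤ, (z : ℝ) = x then 0 else x - ⌊x⌋ - 1/2

/-- The classical Dedekind sum `s(m,n)`. -/
noncomputable def ded (m n : ℤ) : ℝ :=
  ∑ k ∈ Finset.Icc (1 : ℤ) n, saw ((k : ℝ) / n) * saw ((m : ℝ) * k / n)

/-- The normalized Dedekind sum `S(m,n) = 12 s(m,n)`. -/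
noncomputable def Sded (m n : ℤ) : ℝ := 12 * ded m n

noncomputable def gg (n r : ℤ) : ℝ := if r = 0 then 0 else (r:ℝ)/(n:ℝ) - 1/2

lemma saw_int_div (j n : ℤ) (hn : 0 < n) :
    saw ((j:ℝ)/(n:ℝ)) = gg n (j % n) := by
  have hnR : (0:ℝ) < (n:ℝ) := by exact_mod_cast hn
  have hn' : (n:ℝ) ≠ 0 := hnR.ne'
  unfold saw gg
  by_cases h : j % n = 0
  · have hd : n ∣ j := Int.dvd_of_emod_eq_zero h
    obtain ⟨c, rfl⟩ := hd
    have h1 : ∃ z : ℤ, (z:ℝ) = ((n*c : ℤ):ℝ)/n := ⟨c, by push_cast; field_simp⟩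
    rw [if_pos h1, if_pos h]
  · have h1 : ¬ ∃ z : ℤ, (z:ℝ) = (j:ℝ)/n := by
      rintro ⟨z, hz⟩
      apply h
      have h2 : (j:ℝ) = ((z*n : ℤ):ℝ) := by push_cast; field_simp at hz ⊢; linarith
      have h3 : j = z * n := by exact_mod_cast h2
      simp [h3, Int.mul_emod_left]
    rw [if_neg h1, if_neg h]
    have key : (j:ℝ)/n = ((j / n : ℤ):ℝ) + ((j % n : ℤ):ℝ)/n := by
      have h4 := Int.mul_ediv_add_emod j n
      have h5 : (j:ℝ) = (n:ℝ) * ((j/n : ℤ):ℝ) + ((j % n : ℤ):ℝ) := by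
        exact_mod_cast congrArg (fun z : ℤ => (z:ℝ)) h4.symm
      field_simp
      linarith
    have h0 : (0:ℝ) ≤ ((j % n : ℤ):ℝ)/n :=
      div_nonneg (by exact_mod_cast Int.emod_nonneg j hn.ne') hnR.le
    have hlt : ((j % n : ℤ):ℝ)/n < 1 := by
      rw [div_lt_one hnR]
      exact_mod_cast Int.emod_lt_of_pos j hn
    rw [key, Int.floor_intCast_add, Int.floor_eq_zero_iff.2 ⟨h0, hlt⟩]
    push_cast
    ring

lemma ded_eq (m n : ℤ) (hn : 0 < n) :
    ded m n = ∑ j ∈ Icc (1:ℤ) n, gg n (j % n) * gg n ((m*j) % n) := by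
  unfold ded
  refine sum_congr rfl fun j _ => ?_
  rw [show (m:ℝ) * j / n = ((m*j : ℤ):ℝ)/n by push_cast; ring,
    saw_int_div j n hn, saw_int_div (m*j) n hn]

lemma ded_eq' (m n : ℤ) (hn : 0 < n) :
    ded m n = ∑ j ∈ Ico (0:ℤ) n, gg n (j % n) * gg n ((m*j) % n) := by
  rw [ded_eq m n hn]
  have h1 : Icc (1:ℤ) n = insert n (Ico 1 n) := (Finset.Ico_insert_right hn).symm
  have h2 : Ico (0:ℤ) n = insert 0 (Ico 1 n) := by
    ext x; simp [Finset.mem_Ico, Finset.mem_insert]; omega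
  rw [h1, h2, Finset.sum_insert (by simp), Finset.sum_insert (by simp)]
  simp [gg, Int.emod_self]

-- shift bijection
lemma sum_shift (p k : ℤ) (hp : 0 < p) (F : ℤ → ℝ) :
    ∑ b ∈ Ico (0:ℤ) p, F ((b + k) % p) = ∑ b ∈ Ico (0:ℤ) p, F b := by
  refine Finset.sum_nbij' (fun b => (b + k) % p) (fun b => (b - k) % p) ?_ ?_ ?_ ?_ ?_
  · intro a _; simp [Int.emod_nonneg _ hp.ne', Int.emod_lt_of_pos _ hp]
  · intro a _; simp [Int.emod_nonneg _ hp.ne', Int.emod_lt_of_pos _ hp]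
  · intro a ha
    simp only [mem_Ico] at ha
    show ((a + k) % p - k) % p = a
    rw [Int.sub_emod, Int.emod_emod_of_dvd _ dvd_rfl, ← Int.sub_emod,
      add_sub_cancel_right, Int.emod_eq_of_lt ha.1 ha.2]
  · intro a ha
    simp only [mem_Ico] at ha
    show ((a - k) % p + k) % p = a
    rw [Int.add_emod, Int.emod_emod_of_dvd _ dvd_rfl, ← Int.add_emod,
      sub_add_cancel, Int.emod_eq_of_lt ha.1 ha.2]
  · intro a _; rfl

-- multiplication bijection
lemma sum_mul_bij (p m : ℤ) (hp : 0 < p) (hc : IsCoprime m p) (F : ℤ → ℝ) :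
    ∑ a ∈ Ico (0:ℤ) p, F ((m * a) % p) = ∑ a ∈ Ico (0:ℤ) p, F a := by
  obtain ⟨u, v, huv⟩ := hc
  refine Finset.sum_nbij' (fun a => (m * a) % p) (fun a => (u * a) % p) ?_ ?_ ?_ ?_ ?_
  · intro a _; simp [Int.emod_nonneg _ hp.ne', Int.emod_lt_of_pos _ hp]
  · intro a _; simp [Int.emod_nonneg _ hp.ne', Int.emod_lt_of_pos _ hp]
  · intro a ha
    simp only [mem_Ico] at ha
    show (u * (m * a % p)) % p = a
    rw [Int.mul_emod u, Int.emod_emod_of_dvd _ dvd_rfl, ← Int.mul_emod,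
      show u * (m * a) = a + p * (-(v * a)) by linear_combination a * huv,
      Int.add_mul_emod_self_left, Int.emod_eq_of_lt ha.1 ha.2]
  · intro a ha
    simp only [mem_Ico] at ha
    show (m * (u * a % p)) % p = a
    rw [Int.mul_emod m, Int.emod_emod_of_dvd _ dvd_rfl, ← Int.mul_emod,
      show m * (u * a) = a + p * (-(v * a)) by linear_combination a * huv,
      Int.add_mul_emod_self_left, Int.emod_eq_of_lt ha.1 ha.2]
  · intro a _; rfl

lemma prod_reindex (p : ℤ) (hp : 0 < p) (F : ℤ → ℝ) :
    ∑ j ∈ Ico (0:ℤ) (p^2), F j = ∑ a ∈ Ico (0:ℤ) p, ∑ b ∈ Ico (0:ℤ) p, F (a + p*b) := by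
  rw [← Finset.sum_product']
  refine Finset.sum_nbij' (fun j => (j % p, j / p)) (fun x => x.1 + p * x.2) ?_ ?_ ?_ ?_ ?_
  · intro j hj
    simp only [mem_Ico, mem_product] at hj ⊢
    refine ⟨⟨Int.emod_nonneg _ hp.ne', Int.emod_lt_of_pos _ hp⟩,
      Int.ediv_nonneg hj.1 hp.le, ?_⟩
    rw [Int.ediv_lt_iff_lt_mul hp]
    nlinarith [hj.2]
  · intro x hx
    simp only [mem_Ico, mem_product] at hx ⊢
    obtain ⟨⟨h1, h2⟩, h3, h4⟩ := hx
    constructor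
    · positivity
    · nlinarith
  · intro j _
    show j % p + p * (j / p) = j
    exact Int.emod_add_mul_ediv j p
  · intro x hx
    simp only [mem_Ico, mem_product] at hx
    obtain ⟨⟨h1, h2⟩, h3, h4⟩ := hx
    show (_ % p, _ / p) = x
    rw [Int.add_mul_emod_self_left, Int.emod_eq_of_lt h1 h2,
      Int.add_mul_ediv_left _ _ hp.ne', Int.ediv_eq_zero_of_lt h1 h2, zero_add]
  · intro j hj
    simp only [mem_Ico] at hj
    show F j = F (j % p + p * (j / p))
    rw [Int.emod_add_mul_ediv j p]

lemma key_emod (p m a b : ℤ) (hp : 0 < p) (ha : 0 ≤ a) (ha' : a < p)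
    (hb : 0 ≤ b) (hb' : b < p) :
    ((1 + p*m) * (a + p*b)) % p^2 = a + p*((b + m*a) % p) := by
  have h1 : (1 + p*m) * (a + p*b) = (a + p*(b + m*a)) + p^2*(m*b) := by ring
  rw [h1, Int.add_mul_emod_self_left]
  have h2 : b + m*a = p * ((b + m*a)/p) + (b + m*a) % p := (Int.mul_ediv_add_emod _ _).symm
  have h3 : a + p*(b + m*a) = (a + p*((b + m*a) % p)) + p^2 * ((b + m*a)/p) := by
    linear_combination p * h2
  rw [h3, Int.add_mul_emod_self_left]
  have hr1 : 0 ≤ (b + m*a) % p := Int.emod_nonneg _ hp.ne'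
  have hr2 : (b + m*a) % p < p := Int.emod_lt_of_pos _ hp
  exact Int.emod_eq_of_lt (by positivity) (by nlinarith)

lemma sum_Ico_range (p : ℕ) (F : ℤ → ℝ) :
    ∑ a ∈ Ico (0:ℤ) (p:ℤ), F a = ∑ i ∈ Finset.range p, F i := by
  refine Finset.sum_nbij' Int.toNat (fun i => (i : ℤ)) ?_ ?_ ?_ ?_ ?_
  · intro a ha; simp only [mem_Ico, mem_range] at ha ⊢; omega
  · intro i hi; simp only [mem_Ico, mem_range] at hi ⊢; omega
  · intro a ha; simp only [mem_Ico] at ha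
    show ((a.toNat : ℕ) : ℤ) = a
    omega
  · intro i _; simp
  · intro a ha; simp only [mem_Ico] at ha
    show F a = F ((a.toNat : ℕ) : ℤ)
    rw [Int.toNat_of_nonneg ha.1]

lemma gauss1 (p : ℕ) : ∑ a ∈ Ico (0:ℤ) (p:ℤ), ((a:ℝ)) = p*(p-1)/2 := by
  rw [sum_Ico_range]
  induction p with
  | zero => simp
  | succ n ih => rw [Finset.sum_range_succ, ih]; push_cast; ring

lemma gauss2 (p : ℕ) : ∑ a ∈ Ico (0:ℤ) (p:ℤ), ((a:ℝ))^2 = p*(p-1)*(2*p-1)/6 := by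
  rw [sum_Ico_range]
  induction p with
  | zero => simp
  | succ n ih => rw [Finset.sum_range_succ, ih]; push_cast; ring

lemma card_Ico_int (p : ℕ) : (Ico (0:ℤ) (p:ℤ)).card = p := by
  simp [Int.card_Ico]

lemma Ico_zero_split (n : ℤ) (hn : 0 < n) (F : ℤ → ℝ) :
    ∑ a ∈ Ico (0:ℤ) n, F a = F 0 + ∑ a ∈ Ico (1:ℤ) n, F a := by
  have h2 : Ico (0:ℤ) n = insert 0 (Ico 1 n) := by
    ext x; simp only [Finset.mem_Ico, Finset.mem_insert]; omega
  rw [h2, Finset.sum_insert (by simp)]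

lemma sum_quad (p : ℕ) (c2 c1 c0 : ℝ) :
    ∑ a ∈ Ico (0:ℤ) (p:ℤ), (c2*(a:ℝ)^2 + c1*(a:ℝ) + c0)
      = c2*((p:ℝ)*((p:ℝ)-1)*(2*(p:ℝ)-1)/6) + c1*((p:ℝ)*((p:ℝ)-1)/2) + (p:ℝ)*c0 := by
  rw [Finset.sum_add_distrib, Finset.sum_add_distrib, ← Finset.mul_sum, ← Finset.mul_sum,
    gauss1, gauss2, Finset.sum_const, card_Ico_int]
  simp [nsmul_eq_mul]

lemma emod_shift (b x n : ℤ) : (b + x % n) % n = (b + x) % n := by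
  rw [Int.add_emod, Int.emod_emod_of_dvd _ dvd_rfl, ← Int.add_emod]

lemma dk_inner_sum (p : ℕ) (hp : 0 < p) (m a : ℤ) (ha1 : 1 ≤ a) (ha2 : a < (p:ℤ)) :
    ∑ b ∈ Ico (0:ℤ) (p:ℤ),
        gg ((p:ℤ)^2) (a + (p:ℤ)*b) * gg ((p:ℤ)^2) (a + (p:ℤ)*((b + m*a) % (p:ℤ)))
      = (p:ℝ)*((a:ℝ)/(p:ℝ)^2 - 1/2)^2 + ((p:ℝ)-1)*((a:ℝ)/(p:ℝ)^2 - 1/2)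
        + (1/(p:ℝ)^2) * ∑ b ∈ Ico (0:ℤ) (p:ℤ), (b:ℝ)*(((b + m*a) % (p:ℤ) : ℤ):ℝ) := by
  have hN : (0:ℤ) < (p:ℤ) := by exact_mod_cast hp
  have hP : (0:ℝ) < (p:ℝ) := by exact_mod_cast hp
  have hPne : (p:ℝ) ≠ 0 := hP.ne'
  have step1 : ∀ b ∈ Ico (0:ℤ) (p:ℤ),
      gg ((p:ℤ)^2) (a + (p:ℤ)*b) * gg ((p:ℤ)^2) (a + (p:ℤ)*((b + m*a) % (p:ℤ)))
      = ((a:ℝ)/(p:ℝ)^2 - 1/2)^2 + (((a:ℝ)/(p:ℝ)^2 - 1/2)/(p:ℝ))*(b:ℝ)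
          + (((a:ℝ)/(p:ℝ)^2 - 1/2)/(p:ℝ))*(((b + m*a) % (p:ℤ) : ℤ):ℝ)
          + (1/(p:ℝ)^2)*((b:ℝ)*(((b + m*a) % (p:ℤ) : ℤ):ℝ)) := by
    intro b hb
    simp only [mem_Ico] at hb
    have hc1 : 0 ≤ (b + m*a) % (p:ℤ) := Int.emod_nonneg _ hN.ne'
    have h1 : gg ((p:ℤ)^2) (a + (p:ℤ)*b) = ((a:ℝ)/(p:ℝ)^2 - 1/2) + (b:ℝ)/(p:ℝ) := by
      unfold gg
      rw [if_neg (by nlinarith [hb.1])]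
      push_cast
      field_simp
      ring
    have h2 : gg ((p:ℤ)^2) (a + (p:ℤ)*((b + m*a) % (p:ℤ)))
        = ((a:ℝ)/(p:ℝ)^2 - 1/2) + (((b + m*a) % (p:ℤ) : ℤ):ℝ)/(p:ℝ) := by
      unfold gg
      rw [if_neg (by nlinarith [hc1])]
      push_cast
      field_simp
      ring
    rw [h1, h2]
    ring
  rw [Finset.sum_congr rfl step1]
  rw [Finset.sum_add_distrib, Finset.sum_add_distrib, Finset.sum_add_distrib,
    ← Finset.mul_sum, ← Finset.mul_sum, ← Finset.mul_sum,
    Finset.sum_const, card_Ico_int,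
    sum_shift (p:ℤ) (m*a) hN (fun x => ((x:ℤ):ℝ)), gauss1]
  generalize (∑ b ∈ Ico (0:ℤ) (p:ℤ), (b:ℝ)*(((b + m*a) % (p:ℤ) : ℤ):ℝ)) = S
  rw [nsmul_eq_mul]
  push_cast
  field_simp
  ring

lemma Qsum (p : ℕ) (hp : p.Prime) (m : ℤ) (hm : ¬((p:ℤ) ∣ m)) :
    ∑ a ∈ Ico (1:ℤ) (p:ℤ), ∑ b ∈ Ico (0:ℤ) (p:ℤ), (b:ℝ)*(((b + m*a) % (p:ℤ) : ℤ):ℝ)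
      = ((p:ℝ)*((p:ℝ)-1)/2)^2 - (p:ℝ)*((p:ℝ)-1)*(2*(p:ℝ)-1)/6 := by
  have hN : (0:ℤ) < (p:ℤ) := by exact_mod_cast hp.pos
  have hco : IsCoprime m ((p:ℤ)) :=
    ((Nat.prime_iff_prime_int.mp hp).coprime_iff_not_dvd.mpr hm).symm
  have split := Ico_zero_split (p:ℤ) hN
    (fun a => ∑ b ∈ Ico (0:ℤ) (p:ℤ), (b:ℝ)*(((b + m*a) % (p:ℤ) : ℤ):ℝ))
  have hF0 : ∑ b ∈ Ico (0:ℤ) (p:ℤ), (b:ℝ)*(((b + m*0) % (p:ℤ) : ℤ):ℝ)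
      = (p:ℝ)*((p:ℝ)-1)*(2*(p:ℝ)-1)/6 := by
    rw [← gauss2 p]
    refine Finset.sum_congr rfl fun b hb => ?_
    simp only [mem_Ico] at hb
    rw [mul_zero, add_zero, Int.emod_eq_of_lt hb.1 hb.2]
    ring
  have hfull : ∑ a ∈ Ico (0:ℤ) (p:ℤ), ∑ b ∈ Ico (0:ℤ) (p:ℤ),
      (b:ℝ)*(((b + m*a) % (p:ℤ) : ℤ):ℝ) = ((p:ℝ)*((p:ℝ)-1)/2)^2 := by
    have e1 : ∀ a ∈ Ico (0:ℤ) (p:ℤ),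
        ∑ b ∈ Ico (0:ℤ) (p:ℤ), (b:ℝ)*(((b + m*a) % (p:ℤ) : ℤ):ℝ)
        = (fun k => ∑ b ∈ Ico (0:ℤ) (p:ℤ), (b:ℝ)*(((b + k) % (p:ℤ) : ℤ):ℝ)) ((m*a) % (p:ℤ)) := by
      intro a _
      simp only []
      refine Finset.sum_congr rfl fun b _ => ?_
      rw [emod_shift]
    rw [Finset.sum_congr rfl e1,
      sum_mul_bij (p:ℤ) m hN hco
        (fun k => ∑ b ∈ Ico (0:ℤ) (p:ℤ), (b:ℝ)*(((b + k) % (p:ℤ) : ℤ):ℝ))]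
    rw [Finset.sum_comm]
    have e2 : ∀ b ∈ Ico (0:ℤ) (p:ℤ),
        ∑ a ∈ Ico (0:ℤ) (p:ℤ), (b:ℝ)*(((b + a) % (p:ℤ) : ℤ):ℝ)
          = (b:ℝ) * ((p:ℝ)*((p:ℝ)-1)/2) := by
      intro b _
      rw [← Finset.mul_sum]
      congr 1
      have e3 : ∀ a ∈ Ico (0:ℤ) (p:ℤ),
          (((b + a) % (p:ℤ) : ℤ):ℝ) = (fun x => ((x:ℤ):ℝ)) ((a + b) % (p:ℤ)) := by
        intro a _; rw [add_comm b a]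
      rw [Finset.sum_congr rfl e3, sum_shift (p:ℤ) b hN (fun x => ((x:ℤ):ℝ)), gauss1]
    rw [Finset.sum_congr rfl e2, ← Finset.sum_mul, gauss1]
    ring
  have := split
  rw [hfull] at this
  rw [hF0] at this
  linarith

lemma ded_key (p : ℕ) (hp : p.Prime) (m : ℤ) (hm : ¬ (p:ℤ) ∣ m) :
    ded (1 + (p:ℤ)*m) ((p:ℤ)^2) = (1 - (p:ℝ)^2)/(6*(p:ℝ)^2) := by
  have hN : (0:ℤ) < (p:ℤ) := by exact_mod_cast hp.pos
  have hN2 : (0:ℤ) < (p:ℤ)^2 := by positivity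
  have hP : (0:ℝ) < (p:ℝ) := by exact_mod_cast hp.pos
  have hPne : (p:ℝ) ≠ 0 := hP.ne'
  rw [ded_eq' _ _ hN2]
  rw [prod_reindex (p:ℤ) hN
    (fun j => gg ((p:ℤ)^2) (j % (p:ℤ)^2) * gg ((p:ℤ)^2) (((1+(p:ℤ)*m)*j) % (p:ℤ)^2))]
  have stepA : ∀ a ∈ Ico (0:ℤ) (p:ℤ),
      (∑ b ∈ Ico (0:ℤ) (p:ℤ),
        gg ((p:ℤ)^2) ((a + (p:ℤ)*b) % (p:ℤ)^2)
          * gg ((p:ℤ)^2) (((1+(p:ℤ)*m)*(a + (p:ℤ)*b)) % (p:ℤ)^2))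
      = ∑ b ∈ Ico (0:ℤ) (p:ℤ),
        gg ((p:ℤ)^2) (a + (p:ℤ)*b) * gg ((p:ℤ)^2) (a + (p:ℤ)*((b + m*a) % (p:ℤ))) := by
    intro a ha
    simp only [mem_Ico] at ha
    refine Finset.sum_congr rfl fun b hb => ?_
    simp only [mem_Ico] at hb
    rw [Int.emod_eq_of_lt (by nlinarith [ha.1, hb.1, hN]) (by nlinarith [ha.2, hb.2, ha.1, hb.1]),
      key_emod _ _ _ _ hN ha.1 ha.2 hb.1 hb.2]
  rw [Finset.sum_congr rfl stepA]
  rw [Ico_zero_split (p:ℤ) hN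
    (fun a => ∑ b ∈ Ico (0:ℤ) (p:ℤ),
      gg ((p:ℤ)^2) (a + (p:ℤ)*b) * gg ((p:ℤ)^2) (a + (p:ℤ)*((b + m*a) % (p:ℤ))))]
  have hA0 : ∑ b ∈ Ico (0:ℤ) (p:ℤ),
      gg ((p:ℤ)^2) ((0:ℤ) + (p:ℤ)*b)
        * gg ((p:ℤ)^2) ((0:ℤ) + (p:ℤ)*((b + m*0) % (p:ℤ)))
      = ((p:ℝ)*((p:ℝ)-1)*(2*(p:ℝ)-1)/6)/(p:ℝ)^2 - ((p:ℝ)*((p:ℝ)-1)/2)/(p:ℝ)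
          + (p:ℝ)/4 - 1/4 := by
    have e1 : ∀ b ∈ Ico (0:ℤ) (p:ℤ),
        gg ((p:ℤ)^2) ((0:ℤ) + (p:ℤ)*b)
          * gg ((p:ℤ)^2) ((0:ℤ) + (p:ℤ)*((b + m*0) % (p:ℤ)))
        = (gg ((p:ℤ)^2) ((p:ℤ)*b))^2 := by
      intro b hb; simp only [mem_Ico] at hb
      rw [mul_zero, add_zero, Int.emod_eq_of_lt hb.1 hb.2, zero_add]
      exact (sq _).symm
    rw [Finset.sum_congr rfl e1,
      Ico_zero_split (p:ℤ) hN (fun b => (gg ((p:ℤ)^2) ((p:ℤ)*b))^2)]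
    have e2 : (gg ((p:ℤ)^2) ((p:ℤ)*0))^2 = 0 := by simp [gg]
    have e3 : ∀ b ∈ Ico (1:ℤ) (p:ℤ), (gg ((p:ℤ)^2) ((p:ℤ)*b))^2
        = (1/(p:ℝ)^2)*(b:ℝ)^2 + (-(1/(p:ℝ)))*(b:ℝ) + 1/4 := by
      intro b hb; simp only [mem_Ico] at hb
      unfold gg
      rw [if_neg (by nlinarith [hb.1])]
      push_cast
      field_simp
      ring
    rw [e2, Finset.sum_congr rfl e3, zero_add]
    have e4 := Ico_zero_split (p:ℤ) hN
      (fun b => (1/(p:ℝ)^2)*(b:ℝ)^2 + (-(1/(p:ℝ)))*(b:ℝ) + 1/4)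
    rw [sum_quad] at e4
    simp only [Int.cast_zero] at e4
    linear_combination (-1 : ℝ) * e4
  rw [hA0]
  -- the a ≥ 1 part
  have stepB : ∀ a ∈ Ico (1:ℤ) (p:ℤ),
      (∑ b ∈ Ico (0:ℤ) (p:ℤ),
        gg ((p:ℤ)^2) (a + (p:ℤ)*b) * gg ((p:ℤ)^2) (a + (p:ℤ)*((b + m*a) % (p:ℤ))))
      = ((1/(p:ℝ)^3)*(a:ℝ)^2 + (-(1/(p:ℝ)^2))*(a:ℝ) + ((p:ℝ)/4 - ((p:ℝ)-1)/2))
        + (1/(p:ℝ)^2) * ∑ b ∈ Ico (0:ℤ) (p:ℤ), (b:ℝ)*(((b + m*a) % (p:ℤ) : ℤ):ℝ) := by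
    intro a ha
    simp only [mem_Ico] at ha
    rw [dk_inner_sum p hp.pos m a ha.1 ha.2]
    congr 1
    field_simp
    ring
  rw [Finset.sum_congr rfl stepB, Finset.sum_add_distrib, ← Finset.mul_sum,
    Qsum p hp m hm]
  have e5 := Ico_zero_split (p:ℤ) hN
    (fun a => (1/(p:ℝ)^3)*(a:ℝ)^2 + (-(1/(p:ℝ)^2))*(a:ℝ) + ((p:ℝ)/4 - ((p:ℝ)-1)/2))
  rw [sum_quad] at e5
  simp only [Int.cast_zero] at e5
  have e6 : ∑ a ∈ Ico (1:ℤ) (p:ℤ),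
      ((1/(p:ℝ)^3)*(a:ℝ)^2 + (-(1/(p:ℝ)^2))*(a:ℝ) + ((p:ℝ)/4 - ((p:ℝ)-1)/2))
      = (1/(p:ℝ)^3)*((p:ℝ)*((p:ℝ)-1)*(2*(p:ℝ)-1)/6) + (-(1/(p:ℝ)^2))*((p:ℝ)*((p:ℝ)-1)/2)
        + (p:ℝ)*((p:ℝ)/4 - ((p:ℝ)-1)/2) - ((p:ℝ)/4 - ((p:ℝ)-1)/2) := by
    linear_combination (-1 : ℝ) * e5
  rw [e6]
  field_simp
  ring

lemma ded_period (a n c : ℤ) (hn : 0 < n) : ded (a + n*c) n = ded a n := by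
  rw [ded_eq _ _ hn, ded_eq _ _ hn]
  refine Finset.sum_congr rfl fun j _ => ?_
  congr 2
  rw [show (a + n*c)*j = a*j + n*(c*j) by ring, Int.add_mul_emod_self_left]

lemma gg_neg (n x : ℤ) (hn : 0 < n) : gg n ((-x) % n) = - gg n (x % n) := by
  unfold gg
  by_cases h : x % n = 0
  · have h2 : (-x) % n = 0 :=
      Int.emod_eq_zero_of_dvd (dvd_neg.mpr (Int.dvd_of_emod_eq_zero h))
    rw [if_pos h2, if_pos h]; ring
  · have h3 : 0 ≤ x % n := Int.emod_nonneg _ hn.ne'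
    have h4 : x % n < n := Int.emod_lt_of_pos _ hn
    have key : (-x) % n = n - x % n := by
      rw [show -x = (n - x % n) + n * (-(x/n) - 1) by
        linear_combination Int.mul_ediv_add_emod x n, Int.add_mul_emod_self_left]
      exact Int.emod_eq_of_lt (by omega) (by omega)
    have h2 : (-x) % n ≠ 0 := by omega
    rw [if_neg h2, if_neg h, key]
    push_cast
    field_simp
    ring

lemma ded_neg (a n : ℤ) (hn : 0 < n) : ded (-a) n = - ded a n := by
  rw [ded_eq _ _ hn, ded_eq _ _ hn, ← Finset.sum_neg_distrib]
  refine Finset.sum_congr rfl fun j _ => ?_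
  rw [show (-a)*j = -(a*j) by ring, gg_neg n (a*j) hn]
  ring

theorem prime_square_equal_dedekind_sums (p : ℕ) (hp : p.Prime)
    (ε : ℤ) (hε : ε = 1 ∨ ε = -1) :
    ∀ m : ℤ, 1 ≤ m → m ≤ (p : ℤ) - 1 →
      Sded (ε + (p : ℤ) * m) ((p : ℤ) ^ 2) =
        (ε : ℝ) * (2 / (p : ℝ) ^ 2 - 2) := by
  intro m hm1 hm2
  have hN : (0:ℤ) < (p:ℤ) := by exact_mod_cast hp.pos
  have hN2 : (0:ℤ) < (p:ℤ)^2 := by positivity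
  have hP : (0:ℝ) < (p:ℝ) := by exact_mod_cast hp.pos
  have hPne : (p:ℝ) ≠ 0 := hP.ne'
  rcases hε with rfl | rfl
  · have hm : ¬ (p:ℤ) ∣ m := by
      intro hd
      have := Int.le_of_dvd (by omega) hd
      omega
    unfold Sded
    rw [ded_key p hp m hm]
    push_cast
    field_simp
    ring
  · have hm : ¬ (p:ℤ) ∣ ((p:ℤ) - m) := by
      intro hd
      have h5 : (p:ℤ) ∣ m := (dvd_sub_right dvd_rfl).mp hd
      have := Int.le_of_dvd (by omega) h5
      omega
    unfold Sded
    rw [show (-1 + (p:ℤ)*m) = -(1 + (p:ℤ)*((p:ℤ) - m)) + (p:ℤ)^2 * 1 by ring,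
      ded_period _ _ _ hN2, ded_neg _ _ hN2, ded_key p hp ((p:ℤ) - m) hm]
    push_cast
    field_simp
    ring
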